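/- If H is a finite connected graph and n is an integer with n ≥ mp(H), then the monophonic position number of the Cartesian product of the complete graph K_n with H equals n, i.e. mp(K_n □ H) = n. -/

import Mathlib

open SimpleGraph

/-- A walk is *monophonic* if it is an induced path: it is a path and the only
edges of the graph between vertices of the walk are the edges of the walk. -/
def SimpleGraph.Walk.IsMonophonic {V : Type*} {G : SimpleGraph V} {u v : V}
    (p : G.Walk u v) : Prop :=
  p.IsPath ∧ ∀ a b : V, a ∈ p.support → b ∈ p.support → G.Adj a b → p.toSubgraph.Adj a b

namespace SimpleGraph.Walk

variable {V : Type*} {G : SimpleGraph V} {u v w : V}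

lemma IsMonophonic.isPath {p : G.Walk u v} (h : p.IsMonophonic) : p.IsPath := h.1

lemma toSubgraph_adj_of_mem_edges {p : G.Walk u v} {a b : V} (h : s(a,b) ∈ p.edges) :
    p.toSubgraph.Adj a b := by
  rw [← Subgraph.mem_edgeSet, mem_edges_toSubgraph]; exact h

lemma mem_support_of_toSubgraph_adj {p : G.Walk u v} {a b : V} (h : p.toSubgraph.Adj a b) :
    a ∈ p.support := by
  rw [← mem_verts_toSubgraph]; exact h.fst_mem

/-- supports of the two halves of a path meet only in the midpoint -/
lemma eq_mid_of_isPath_append {p : G.Walk u v} {q : G.Walk v w}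
    (h : (p.append q).IsPath) {t : V} (htp : t ∈ p.support) (htq : t ∈ q.support) : t = v := by
  have hn := h.support_nodup
  rw [support_append] at hn
  have h0 : t = v ∨ t ∈ q.support.tail := by
    rw [support_eq_cons] at htq; exact List.mem_cons.1 htq
  rcases h0 with h1 | h1
  · exact h1
  · exact absurd htp (fun hc => (List.disjoint_of_nodup_append hn) hc h1)

lemma IsMonophonic.of_append_left {p : G.Walk u v} {q : G.Walk v w}
    (h : (p.append q).IsMonophonic) : p.IsMonophonic := by
  refine ⟨h.1.of_append_left, fun a b ha hb hadj => ?_⟩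
  have := h.2 a b (by rw [mem_support_append_iff]; exact .inl ha)
    (by rw [mem_support_append_iff]; exact .inl hb) hadj
  rw [toSubgraph_append, Subgraph.sup_adj] at this
  rcases this with h1 | h1
  · exact h1
  · have ha' := eq_mid_of_isPath_append h.1 ha (mem_support_of_toSubgraph_adj h1)
    have hb' := eq_mid_of_isPath_append h.1 hb (mem_support_of_toSubgraph_adj h1.symm)
    subst ha'; subst hb'; exact absurd hadj (G.irrefl)

lemma IsMonophonic.of_append_right {p : G.Walk u v} {q : G.Walk v w}
    (h : (p.append q).IsMonophonic) : q.IsMonophonic := by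
  refine ⟨h.1.of_append_right, fun a b ha hb hadj => ?_⟩
  have := h.2 a b (by rw [mem_support_append_iff]; exact .inr ha)
    (by rw [mem_support_append_iff]; exact .inr hb) hadj
  rw [toSubgraph_append, Subgraph.sup_adj] at this
  rcases this with h1 | h1
  · have ha' := eq_mid_of_isPath_append h.1 (mem_support_of_toSubgraph_adj h1) ha
    have hb' := eq_mid_of_isPath_append h.1 (mem_support_of_toSubgraph_adj h1.symm) hb
    subst ha'; subst hb'; exact absurd hadj (G.irrefl)
  · exact h1

lemma IsMonophonic.of_cons {x : V} {e : G.Adj u x} {q : G.Walk x w}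
    (h : (Walk.cons e q).IsMonophonic) : q.IsMonophonic := by
  have : (Walk.cons e q) = (Walk.cons e Walk.nil).append q := by simp
  rw [this] at h
  exact h.of_append_right

lemma IsMonophonic.append {p : G.Walk u v} {q : G.Walk v w}
    (hp : p.IsMonophonic) (hq : q.IsMonophonic)
    (hmeet : ∀ t, t ∈ p.support → t ∈ q.support → t = v)
    (hcross : ∀ a b, a ∈ p.support → b ∈ q.support → a ≠ v → b ≠ v → ¬ G.Adj a b) :
    (p.append q).IsMonophonic := by
  have hpath : (p.append q).IsPath := by
    rw [isPath_def, support_append, List.nodup_append]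
    refine ⟨hp.1.support_nodup, ?_, ?_⟩
    · have h2 := hq.1.support_nodup
      rw [support_eq_cons] at h2
      exact h2.of_cons
    · intro t htp t' htq heq; subst heq
      have : t ∈ q.support := List.mem_of_mem_tail htq
      have ht := hmeet t htp this
      subst ht
      have := hq.1.support_nodup
      rw [support_eq_cons] at this
      exact (List.nodup_cons.1 this).1 htq
  refine ⟨hpath, fun a b ha hb hadj => ?_⟩
  rw [toSubgraph_append, Subgraph.sup_adj]
  rw [mem_support_append_iff] at ha hb
  rcases ha with ha | ha <;> rcases hb with hb | hb
  · exact .inl (hp.2 a b ha hb hadj)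
  · by_cases hav : a = v
    · subst hav; exact .inr (hq.2 _ _ q.start_mem_support hb hadj)
    · by_cases hbv : b = v
      · subst hbv; exact .inl (hp.2 _ _ ha p.end_mem_support hadj)
      · exact absurd hadj (hcross a b ha hb hav hbv)
  · by_cases hav : a = v
    · subst hav; exact .inl (hp.2 _ _ p.end_mem_support hb hadj)
    · by_cases hbv : b = v
      · subst hbv; exact .inr (hq.2 _ _ ha q.start_mem_support hadj)
      · exact absurd hadj.symm (hcross b a hb ha hbv hav)
  · exact .inr (hq.2 a b ha hb hadj)

lemma IsMonophonic.nil : (Walk.nil : G.Walk u u).IsMonophonic := by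
  refine ⟨IsPath.nil, fun a b ha hb hadj => ?_⟩
  simp only [support_nil, List.mem_singleton] at ha hb
  subst ha; subst hb; exact absurd hadj (G.irrefl)

lemma IsMonophonic.edge (h : G.Adj u v) : (Walk.cons h Walk.nil).IsMonophonic := by
  refine ⟨by simp [h.ne], fun a b ha hb hadj => ?_⟩
  simp only [support_cons, support_nil, List.mem_cons, List.mem_singleton,
    List.not_mem_nil, or_false] at ha hb
  simp only [Walk.toSubgraph]
  rcases ha with rfl | rfl <;> rcases hb with rfl | rfl
  · exact absurd hadj (G.irrefl)
  · simp
  · simp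
  · exact absurd hadj (G.irrefl)

lemma IsMonophonic.cons {x : V} (e : G.Adj u x) {q : G.Walk x w}
    (hq : q.IsMonophonic) (hu : u ∉ q.support)
    (hcr : ∀ t, t ∈ q.support → t ≠ x → ¬ G.Adj u t) :
    (Walk.cons e q).IsMonophonic := by
  have : (Walk.cons e q) = (Walk.cons e Walk.nil).append q := by simp
  rw [this]
  refine (IsMonophonic.edge e).append hq ?_ ?_
  · intro t htp htq
    simp only [support_cons, support_nil, List.mem_cons, List.mem_singleton,
      List.not_mem_nil, or_false] at htp
    rcases htp with rfl | rfl
    · exact absurd htq hu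
    · rfl
  · intro a b ha hb hax hbx
    simp only [support_cons, support_nil, List.mem_cons, List.mem_singleton,
      List.not_mem_nil, or_false] at ha
    rcases ha with rfl | rfl
    · exact hcr b hb hbx
    · exact absurd rfl hax

lemma IsMonophonic.reverse {p : G.Walk u v} (h : p.IsMonophonic) : p.reverse.IsMonophonic := by
  refine ⟨h.1.reverse, fun a b ha hb hadj => ?_⟩
  rw [support_reverse, List.mem_reverse] at ha hb
  rw [toSubgraph_reverse]
  exact h.2 a b ha hb hadj

/-- no triangle inside a path -/
lemma path_triangle_false {p : G.Walk u v} (hp : p.IsPath) {x y z : V}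
    (hxy : p.toSubgraph.Adj x y) (hyz : p.toSubgraph.Adj y z)
    (hxz : p.toSubgraph.Adj x z) : False := by
  induction p with
  | nil => simp only [Walk.toSubgraph, singletonSubgraph_adj, Pi.bot_apply] at hxy; exact hxy
  | @cons a b c e q ih =>
    have ha : a ∉ q.support := ((cons_isPath_iff _ _).1 hp).2
    have hmemq : ∀ {s t : V}, q.toSubgraph.Adj s t → s ≠ a ∧ t ≠ a := by
      intro s t hst
      constructor
      · rintro rfl; exact ha (mem_support_of_toSubgraph_adj hst)
      · rintro rfl; exact ha (mem_support_of_toSubgraph_adj hst.symm)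
    have hcase : ∀ {s t : V}, (Walk.cons e q).toSubgraph.Adj s t →
        q.toSubgraph.Adj s t ∨ (s = a ∧ t = b) ∨ (s = b ∧ t = a) := by
      intro s t hst
      simp only [Walk.toSubgraph, Subgraph.sup_adj, subgraphOfAdj_adj, Sym2.eq, Sym2.rel_iff',
        Prod.mk.injEq, Prod.swap_prod_mk] at hst
      tauto
    have hab : a ≠ b := e.ne
    have hxyne : x ≠ y := hxy.ne
    have hyzne : y ≠ z := hyz.ne
    have hxzne : x ≠ z := hxz.ne
    rcases hcase hxy with h1 | ⟨rfl, rfl⟩ | ⟨rfl, rfl⟩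
    · have hxa := (hmemq h1).1
      have hya := (hmemq h1).2
      rcases hcase hyz with h2 | ⟨h2a, h2b⟩ | ⟨h2a, rfl⟩
      · rcases hcase hxz with h3 | ⟨h3a, h3b⟩ | ⟨h3a, h3b⟩
        · exact ih hp.of_cons h1 h2 h3
        · exact hxa h3a
        · exact (hmemq h2).2 h3b
      · exact hya h2a
      · rcases hcase hxz with h3 | ⟨h3a, h3b⟩ | ⟨h3a, h3b⟩
        · exact (hmemq h3).2 rfl
        · exact hxa h3a
        · exact hxyne (h3a.trans h2a.symm)
    · -- x = a, y = b
      rcases hcase hyz with h2 | ⟨h2a, h2b⟩ | ⟨h2a, h2b⟩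
      · rcases hcase hxz with h3 | ⟨h3a, h3b⟩ | ⟨h3a, h3b⟩
        · exact (hmemq h3).1 rfl
        · exact hyzne h3b.symm
        · exact hxyne h3a
      · exact hxyne h2a.symm
      · exact hxzne h2b.symm
    · -- x = b, y = a
      rcases hcase hyz with h2 | ⟨h2a, h2b⟩ | ⟨h2a, h2b⟩
      · exact (hmemq h2).1 rfl
      · exact hxzne h2b.symm
      · exact hxyne h2a.symm
end SimpleGraph.Walk

namespace SimpleGraph.Walk

variable {V : Type*} {G : SimpleGraph V} {u v w : V}

lemma two_on_path {u w : V} (p : G.Walk u w) {b c : V}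
    (hb : b ∈ p.support) (hc : c ∈ p.support) (hbu : b ≠ u) (hcu : c ≠ u) (hbc : b ≠ c) :
    ∃ (z : V) (q : G.Walk u z) (r : G.Walk z w) (y : V),
      p = q.append r ∧ y ∈ q.support ∧ ((y = b ∧ z = c) ∨ (y = c ∧ z = b)) := by
  induction p with
  | nil =>
    simp only [support_nil, List.mem_singleton] at hb
    exact absurd hb hbu
  | @cons a a2 a3 e t ih =>
    have hb' : b ∈ t.support := by
      rcases List.mem_cons.1 (by simpa using hb) with h | h
      · exact absurd h hbu
      · exact h
    have hc' : c ∈ t.support := by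
      rcases List.mem_cons.1 (by simpa using hc) with h | h
      · exact absurd h hcu
      · exact h
    by_cases ha2b : a2 = b
    · obtain ⟨t1, t2, rfl⟩ := mem_support_iff_exists_append.1 hc'
      refine ⟨c, Walk.cons e t1, t2, b, by rw [Walk.cons_append], ?_, .inl ⟨rfl, rfl⟩⟩
      rw [support_cons]
      exact List.mem_cons_of_mem _ (ha2b ▸ t1.start_mem_support)
    · by_cases ha2c : a2 = c
      · obtain ⟨t1, t2, rfl⟩ := mem_support_iff_exists_append.1 hb'
        refine ⟨b, Walk.cons e t1, t2, c, by rw [Walk.cons_append], ?_, .inr ⟨rfl, rfl⟩⟩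
        rw [support_cons]
        exact List.mem_cons_of_mem _ (ha2c ▸ t1.start_mem_support)
      · obtain ⟨z, q, r, y, rfl, hyq, hyz⟩ :=
          ih hb' hc' (fun h => ha2b h.symm) (fun h => ha2c h.symm)
        exact ⟨z, Walk.cons e q, r, y, by rw [Walk.cons_append], by
          rw [support_cons]; exact List.mem_cons_of_mem _ hyq, hyz⟩

lemma three_aux {u w : V} {p : G.Walk u w} (hm : p.IsMonophonic) {b c : V}
    (hb : b ∈ p.support) (hc : c ∈ p.support) (hbu : b ≠ u) (hcu : c ≠ u) (hbc : b ≠ c) :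
    ∃ (y z : V) (r : G.Walk u z), r.IsMonophonic ∧ y ∈ r.support ∧
      y ≠ u ∧ y ≠ z ∧ u ≠ z ∧ ((y = b ∧ z = c) ∨ (y = c ∧ z = b)) := by
  obtain ⟨z, q, r, y, hp, hyq, hyz⟩ := two_on_path p hb hc hbu hcu hbc
  rw [hp] at hm
  refine ⟨y, z, q, hm.of_append_left, hyq, ?_, ?_, ?_, hyz⟩
  · rcases hyz with ⟨rfl, _⟩ | ⟨rfl, _⟩
    · exact hbu
    · exact hcu
  · rcases hyz with ⟨rfl, rfl⟩ | ⟨rfl, rfl⟩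
    · exact hbc
    · exact fun h => hbc h.symm
  · rcases hyz with ⟨_, rfl⟩ | ⟨_, rfl⟩
    · exact fun h => hcu h.symm
    · exact fun h => hbu h.symm

lemma three_on_path {u w : V} {p : G.Walk u w} (hm : p.IsMonophonic) {a b c : V}
    (ha : a ∈ p.support) (hb : b ∈ p.support) (hc : c ∈ p.support)
    (hab : a ≠ b) (hac : a ≠ c) (hbc : b ≠ c) :
    ∃ (x y z : V) (r : G.Walk x z), r.IsMonophonic ∧ y ∈ r.support ∧
      x ≠ y ∧ y ≠ z ∧ x ≠ z ∧
      x ∈ ({a, b, c} : Set V) ∧ y ∈ ({a, b, c} : Set V) ∧ z ∈ ({a, b, c} : Set V) := by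
  induction p with
  | nil =>
    simp only [support_nil, List.mem_singleton] at ha hb
    exact absurd (ha.trans hb.symm) hab
  | @cons a1 a2 a3 e t ih =>
    by_cases hau : a = a1
    · subst hau
      obtain ⟨y, z, r, h1, h2, h3, h4, h5, h6⟩ :=
        three_aux hm hb hc (fun h => hab (h.symm)) (fun h => hac (h.symm)) hbc
      refine ⟨a, y, z, r, h1, h2, fun h => h3 h.symm, h4, h5, by simp, ?_, ?_⟩
      · rcases h6 with ⟨rfl, _⟩ | ⟨rfl, _⟩ <;> simp
      · rcases h6 with ⟨_, rfl⟩ | ⟨_, rfl⟩ <;> simp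
    · by_cases hbu : b = a1
      · subst hbu
        obtain ⟨y, z, r, h1, h2, h3, h4, h5, h6⟩ :=
          three_aux hm ha hc (fun h => hau h) (fun h => hbc h.symm) hac
        refine ⟨b, y, z, r, h1, h2, fun h => h3 h.symm, h4, h5, by simp, ?_, ?_⟩
        · rcases h6 with ⟨rfl, _⟩ | ⟨rfl, _⟩ <;> simp
        · rcases h6 with ⟨_, rfl⟩ | ⟨_, rfl⟩ <;> simp
      · by_cases hcu : c = a1
        · subst hcu
          obtain ⟨y, z, r, h1, h2, h3, h4, h5, h6⟩ :=
            three_aux hm ha hb (fun h => hau h) (fun h => hbu h) hab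
          refine ⟨c, y, z, r, h1, h2, fun h => h3 h.symm, h4, h5, by simp, ?_, ?_⟩
          · rcases h6 with ⟨rfl, _⟩ | ⟨rfl, _⟩ <;> simp
          · rcases h6 with ⟨_, rfl⟩ | ⟨_, rfl⟩ <;> simp
        · have ha' : a ∈ t.support := by
            rcases List.mem_cons.1 (by simpa using ha) with h | h
            · exact absurd h hau
            · exact h
          have hb' : b ∈ t.support := by
            rcases List.mem_cons.1 (by simpa using hb) with h | h
            · exact absurd h hbu
            · exact h
          have hc' : c ∈ t.support := by
            rcases List.mem_cons.1 (by simpa using hc) with h | h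
            · exact absurd h hcu
            · exact h
          exact ih hm.of_cons ha' hb' hc'

lemma exists_mono {a c : V} (h : G.Reachable a c) :
    ∃ r : G.Walk a c, r.IsMonophonic := by
  classical
  have hne : {m | ∃ p : G.Walk a c, p.length = m}.Nonempty := by
    obtain ⟨w⟩ := h
    exact ⟨w.length, w, rfl⟩
  obtain ⟨p0, hp0⟩ := Nat.sInf_mem hne
  set m0 := sInf {m | ∃ p : G.Walk a c, p.length = m} with hm0
  have hmin : ∀ q : G.Walk a c, m0 ≤ q.length := fun q => Nat.sInf_le ⟨q, rfl⟩
  set p := p0.bypass with hpdef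
  have hplen : p.length ≤ m0 := hp0 ▸ p0.length_bypass_le
  refine ⟨p, p0.bypass_isPath, fun x y hx hy hadj => ?_⟩
  by_contra hno
  have hedge : s(x, y) ∉ p.edges := fun he => hno (toSubgraph_adj_of_mem_edges he)
  -- orient: find decomposition p = q ++ r with r from one endpoint, other endpoint in r
  have horient : (∃ (q : G.Walk a x) (r : G.Walk x c), p = q.append r ∧ y ∈ r.support) ∨
      (∃ (q : G.Walk a y) (r : G.Walk y c), p = q.append r ∧ x ∈ r.support) := by
    obtain ⟨q, r, hqr⟩ := mem_support_iff_exists_append.1 hx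
    have := hy
    rw [hqr, mem_support_append_iff] at this
    rcases this with h1 | h1
    · obtain ⟨q1, q2, hq12⟩ := mem_support_iff_exists_append.1 h1
      refine .inr ⟨q1, q2.append r, by rw [hqr, hq12, append_assoc], ?_⟩
      rw [mem_support_append_iff]
      exact .inl q2.end_mem_support
    · exact .inl ⟨q, r, hqr, h1⟩
  have key : ∀ (x' y' : V), G.Adj x' y' → s(x', y') ∉ p.edges →
      (∃ (q : G.Walk a x') (r : G.Walk x' c), p = q.append r ∧ y' ∈ r.support) → False := by
    intro x' y' hadj' hedge' ⟨q, r, hqr, hyr⟩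
    obtain ⟨r1, r2, hr12⟩ := mem_support_iff_exists_append.1 hyr
    -- r1 : Walk x' y'
    have hlen : q.length + (r1.length + r2.length) = p.length := by
      rw [hqr, hr12, length_append, length_append]
    have hr1 : 2 ≤ r1.length := by
      match r1, hr12 with
      | Walk.nil, _ => exact absurd rfl hadj'.ne
      | Walk.cons e1 Walk.nil, hr12 => 
        exact absurd (by rw [hqr, hr12]; simp [edges_append, edges_cons]) hedge'
      | Walk.cons e1 (Walk.cons e2 t2), _ => simp only [length_cons]; omega
    have hple : p.length = m0 := le_antisymm hplen (hmin p)
    have hcontra := hmin (q.append (Walk.cons hadj' r2))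
    rw [length_append, length_cons] at hcontra
    omega
  rcases horient with hcase | hcase
  · exact key x y hadj hedge hcase
  · exact key y x hadj.symm (fun he => hedge (Sym2.eq_swap ▸ he)) hcase

end SimpleGraph.Walk

section Product

open SimpleGraph Walk

variable {β : Type*} {H : SimpleGraph β} {n : ℕ}

private abbrev PG (n : ℕ) (H : SimpleGraph β) : SimpleGraph (Fin n × β) :=
  (⊤ : SimpleGraph (Fin n)) □ H

lemma hopAdj {i j : Fin n} (h : i ≠ j) (t : β) : (PG n H).Adj (i, t) (j, t) :=
  boxProd_adj.2 (.inl ⟨(top_adj i j).2 h, rfl⟩)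

lemma colAdj (i : Fin n) {s t : β} (h : H.Adj s t) : (PG n H).Adj (i, s) (i, t) :=
  boxProd_adj_right.2 h

lemma prodAdj_cases {i j : Fin n} {s t : β} (h : (PG n H).Adj (i, s) (j, t)) :
    (i ≠ j ∧ s = t) ∨ (i = j ∧ H.Adj s t) := by
  rcases boxProd_adj.1 h with ⟨h1, h2⟩ | ⟨h1, h2⟩
  · exact .inl ⟨(top_adj i j).1 h1, h2⟩
  · exact .inr ⟨h2, h1⟩

/-- the walk in column `i` of the product corresponding to a walk in `H`. -/
def colW (i : Fin n) {a b : β} (r : H.Walk a b) : (PG n H).Walk (i, a) (i, b) :=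
  r.map (SimpleGraph.boxProdRight (⊤ : SimpleGraph (Fin n)) H i).toHom

lemma support_colW (i : Fin n) {a b : β} (r : H.Walk a b) :
    (colW i r).support = r.support.map (fun t => (i, t)) := by
  show (r.map (SimpleGraph.boxProdRight (⊤ : SimpleGraph (Fin n)) H i).toHom).support = _
  rw [Walk.support_map]
  rfl

lemma mem_support_colW {i : Fin n} {a b : β} {r : H.Walk a b} {x : Fin n × β} :
    x ∈ (colW i r).support ↔ ∃ t ∈ r.support, x = (i, t) := by
  rw [support_colW, List.mem_map]
  constructor
  · rintro ⟨t, ht, rfl⟩; exact ⟨t, ht, rfl⟩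
  · rintro ⟨t, ht, rfl⟩; exact ⟨t, ht, rfl⟩

lemma mem_support_colW' {i : Fin n} {a b : β} {r : H.Walk a b} {t : β} (ht : t ∈ r.support) :
    (i, t) ∈ (colW i r).support :=
  mem_support_colW.2 ⟨t, ht, rfl⟩

lemma mono_colW (i : Fin n) {a b : β} {r : H.Walk a b} (hr : r.IsMonophonic) :
    (colW i r).IsMonophonic := by
  refine ⟨Walk.map_isPath_of_injective
    (SimpleGraph.boxProdRight (⊤ : SimpleGraph (Fin n)) H i).injective hr.1, ?_⟩
  intro x y hx hy hadj
  obtain ⟨s, hs, rfl⟩ := mem_support_colW.1 hx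
  obtain ⟨t, ht, rfl⟩ := mem_support_colW.1 hy
  have hadj' : H.Adj s t := by
    rcases prodAdj_cases hadj with ⟨h1, _⟩ | ⟨_, h2⟩
    · exact absurd rfl h1
    · exact h2
  have := hr.2 s t hs ht hadj'
  show (r.map (SimpleGraph.boxProdRight (⊤ : SimpleGraph (Fin n)) H i).toHom).toSubgraph.Adj _ _
  rw [Walk.toSubgraph_map]
  exact ⟨s, t, this, rfl, rfl⟩

/-- column walk followed by a single hop at the end. -/
lemma mono_colW_hop {m l : Fin n} (hml : m ≠ l) {x z : β} {r : H.Walk x z}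
    (hr : r.IsMonophonic) :
    ((colW m r).append (Walk.cons (hopAdj hml z) Walk.nil)).IsMonophonic := by
  refine (mono_colW m hr).append (Walk.IsMonophonic.edge _) ?_ ?_
  · intro t htc hte
    obtain ⟨s, hs, rfl⟩ := mem_support_colW.1 htc
    simp only [support_cons, support_nil, List.mem_cons, List.mem_singleton,
      List.not_mem_nil, or_false] at hte
    rcases hte with h | h
    · exact h
    · exact absurd (congr_arg Prod.fst h) hml
  · intro a b ha hb hav hbv
    obtain ⟨s, hs, rfl⟩ := mem_support_colW.1 ha
    simp only [support_cons, support_nil, List.mem_cons, List.mem_singleton,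
      List.not_mem_nil, or_false] at hb
    rcases hb with rfl | rfl
    · exact absurd rfl hbv
    · intro hadj
      rcases prodAdj_cases hadj with ⟨_, h2⟩ | ⟨h1, _⟩
      · exact hav (by rw [h2])
      · exact hml h1

lemma conscol {m l : Fin n} (hml : m ≠ l) {x z : β} {r : H.Walk x z} (hr : r.IsMonophonic) :
    ∃ W : (PG n H).Walk (m, x) (l, z), W.IsMonophonic ∧
      (∀ t ∈ r.support, (m, t) ∈ W.support) ∧ (l, z) ∈ W.support := by
  refine ⟨(colW m r).append (Walk.cons (hopAdj hml z) Walk.nil), mono_colW_hop hml hr, ?_, ?_⟩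
  · intro t ht
    rw [mem_support_append_iff]
    exact .inl (mem_support_colW' ht)
  · exact Walk.end_mem_support _

lemma stair {i j l : Fin n} (hij : i ≠ j) (hjl : j ≠ l) (hil : i ≠ l) {x z : β}
    {r : H.Walk x z} (hr : r.IsMonophonic) {y : β} (hy : y ∈ r.support) (hyz : y ≠ z) :
    ∃ W : (PG n H).Walk (i, x) (l, z), W.IsMonophonic ∧
      (i, x) ∈ W.support ∧ (j, y) ∈ W.support ∧ (l, z) ∈ W.support := by
  obtain ⟨r1, r2, rfl⟩ := Walk.mem_support_iff_exists_append.1 hy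
  have hmeet : ∀ t, t ∈ r1.support → t ∈ r2.support → t = y :=
    fun t h1 h2 => Walk.eq_mid_of_isPath_append hr.1 h1 h2
  have hr1 : r1.IsMonophonic := hr.of_append_left
  have hr2 : r2.IsMonophonic := hr.of_append_right
  have hznr1 : z ∉ r1.support := fun h => hyz (hmeet z h r2.end_mem_support).symm
  set W2 := (colW j r2).append (Walk.cons (hopAdj hjl z) Walk.nil) with hW2
  have hmW2 : W2.IsMonophonic := mono_colW_hop hjl hr2
  have hsuppW2 : ∀ t ∈ W2.support, (∃ s ∈ r2.support, t = (j, s)) ∨ t = (l, z) := by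
    intro t ht
    rw [hW2, mem_support_append_iff] at ht
    rcases ht with ht | ht
    · exact .inl (mem_support_colW.1 ht)
    · simp only [support_cons, support_nil, List.mem_cons, List.mem_singleton,
        List.not_mem_nil, or_false] at ht
      rcases ht with rfl | rfl
      · exact .inl ⟨z, r2.end_mem_support, rfl⟩
      · exact .inr rfl
  set R := Walk.cons (hopAdj hij y) W2 with hR
  have hmR : R.IsMonophonic := by
    refine hmW2.cons _ ?_ ?_
    · intro hmem
      rcases hsuppW2 _ hmem with ⟨s, _, heq⟩ | heq
      · exact hij (congr_arg Prod.fst heq)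
      · exact hil (congr_arg Prod.fst heq)
    · intro t htW2 htne hadj
      rcases hsuppW2 _ htW2 with ⟨s, hs, rfl⟩ | rfl
      · rcases prodAdj_cases hadj with ⟨_, h2⟩ | ⟨h1, _⟩
        · exact htne (by rw [h2])
        · exact hij h1
      · rcases prodAdj_cases hadj with ⟨_, h2⟩ | ⟨h1, _⟩
        · exact hyz h2
        · exact hil h1
  refine ⟨(colW i r1).append R, ?_, ?_, ?_, ?_⟩
  · refine (mono_colW i hr1).append hmR ?_ ?_
    · intro t htc htR
      obtain ⟨s, hs, rfl⟩ := mem_support_colW.1 htc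
      rw [hR, support_cons] at htR
      rcases List.mem_cons.1 htR with heq | htR
      · exact heq
      · rcases hsuppW2 _ htR with ⟨s', hs', heq⟩ | heq
        · have : s = s' := congr_arg Prod.snd heq
          subst this
          have : i = j := congr_arg Prod.fst heq
          exact absurd this hij
        · exact absurd (congr_arg Prod.fst heq) hil
    · intro a b ha hb hav hbv hadj
      obtain ⟨s, hs, rfl⟩ := mem_support_colW.1 ha
      rw [hR, support_cons] at hb
      rcases List.mem_cons.1 hb with rfl | hb
      · exact hbv rfl
      · rcases hsuppW2 _ hb with ⟨s', hs', rfl⟩ | rfl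
        · rcases prodAdj_cases hadj with ⟨_, h2⟩ | ⟨h1, _⟩
          · subst h2
            exact hav (by rw [hmeet s hs hs'])
          · exact hij h1
        · rcases prodAdj_cases hadj with ⟨_, h2⟩ | ⟨h1, _⟩
          · subst h2
            exact hznr1 hs
          · exact hil h1
  · rw [mem_support_append_iff]
    exact .inl (Walk.start_mem_support _)
  · rw [mem_support_append_iff, hR, support_cons]
    exact .inr (List.mem_cons_of_mem _ (Walk.start_mem_support W2))
  · rw [mem_support_append_iff]
    exact .inr (Walk.end_mem_support _)

end Product

section Detour

open SimpleGraph Walk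

variable {β : Type*} {H : SimpleGraph β} {n : ℕ}

lemma detour {i j : Fin n} (hij : i ≠ j) {x z : β} {r : H.Walk x z} (hr : r.IsMonophonic)
    {y : β} (hy : y ∈ r.support) (hyx : y ≠ x) (hyz : y ≠ z) :
    ∃ W : (PG n H).Walk (i, x) (i, z), W.IsMonophonic ∧
      (i, x) ∈ W.support ∧ (j, y) ∈ W.support ∧ (i, z) ∈ W.support := by
  obtain ⟨r1, r2, rfl⟩ := Walk.mem_support_iff_exists_append.1 hy
  have hmeet : ∀ t, t ∈ r1.support → t ∈ r2.support → t = y :=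
    fun t h1 h2 => Walk.eq_mid_of_isPath_append hr.1 h1 h2
  have hr1 : r1.IsMonophonic := hr.of_append_left
  have hr2 : r2.IsMonophonic := hr.of_append_right
  -- decompose r2 = cons f t2
  cases r2 with
  | nil => exact absurd rfl hyz
  | @cons _ g _ f t2 =>
  -- decompose r1 from the end
  cases hrev : r1.reverse with
  | nil => exact absurd rfl hyx
  | @cons _ d _ e t =>
  have hr1eq : r1 = t.reverse.append (Walk.cons e.symm Walk.nil) := by
    have : r1 = r1.reverse.reverse := (Walk.reverse_reverse r1).symm
    rw [this, hrev, Walk.reverse_cons]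
  set s1 := t.reverse with hs1def
  -- basic support facts
  have hsupp_r1 : r1.support = s1.support ++ [y] := by
    rw [hr1eq, Walk.support_append]
    simp
  have hynos1 : y ∉ s1.support := by
    have hnd := hr1.1.support_nodup
    rw [hsupp_r1] at hnd
    intro hc
    exact (List.disjoint_of_nodup_append hnd) hc (List.mem_singleton_self y)
  have hs1sub : ∀ {s : β}, s ∈ s1.support → s ∈ r1.support := by
    intro s hs; rw [hsupp_r1]; exact List.mem_append_left _ hs
  have hsupp_r2 : (Walk.cons f t2).support = y :: t2.support := Walk.support_cons _ _
  have hynot2 : y ∉ t2.support := ((Walk.cons_isPath_iff _ _).1 hr2.1).2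
  have ht2sub : ∀ {s : β}, s ∈ t2.support → s ∈ (Walk.cons f t2).support := by
    intro s hs; rw [hsupp_r2]; exact List.mem_cons_of_mem _ hs
  have hdy : d ≠ y := e.ne'
  have hgy : g ≠ y := f.ne'
  have hds1 : d ∈ s1.support := s1.end_mem_support
  have hgt2 : g ∈ t2.support := t2.start_mem_support
  have hdnot2 : d ∉ t2.support := fun hc => hdy (hmeet d (hs1sub hds1) (ht2sub hc))
  have hgnos1 : g ∉ s1.support := fun hc => hgy (hmeet g (hs1sub hc) (ht2sub hgt2))
  have hdg : d ≠ g := fun hc => hgnos1 (hc ▸ hds1)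
  have hznos1 : z ∉ s1.support :=
    fun hc => hyz (hmeet z (hs1sub hc) (Walk.end_mem_support _)).symm
  -- the edges d-y and y-g are edges of r
  have hedge_dy : s(d, y) ∈ r1.edges := by
    rw [hr1eq, Walk.edges_append]
    simp
  have hedge_yg : s(y, g) ∈ (Walk.cons f t2).edges := by
    rw [Walk.edges_cons]
    exact List.mem_cons_self
  have hedges_r : ∀ {a b : β}, s(a, b) ∈ r1.edges ∨ s(a, b) ∈ (Walk.cons f t2).edges →
      (r1.append (Walk.cons f t2)).toSubgraph.Adj a b := by
    intro a b hab
    refine Walk.toSubgraph_adj_of_mem_edges ?_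
    rw [Walk.edges_append, List.mem_append]
    exact hab
  -- no H-edge between d,y,g configuration
  have hadj_dg : ¬ H.Adj d g := by
    intro hadj
    have h1 := hedges_r (.inl hedge_dy)
    have h2 := hedges_r (.inr hedge_yg)
    have h3 := hr.2 d g (by rw [mem_support_append_iff]; exact .inl (hs1sub hds1))
      (by rw [mem_support_append_iff]; exact .inr (ht2sub hgt2)) hadj
    exact Walk.path_triangle_false hr.1 h1 h2 h3
  -- no H-edge between s1-support and t2-support
  have hnoedge : ∀ sa ∈ s1.support, ∀ sb ∈ t2.support, ¬ H.Adj sa sb := by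
    intro sa hsa sb hsb hadj
    have h3 := hr.2 sa sb (by rw [mem_support_append_iff]; exact .inl (hs1sub hsa))
      (by rw [mem_support_append_iff]; exact .inr (ht2sub hsb)) hadj
    rw [Walk.toSubgraph_append, Subgraph.sup_adj] at h3
    rcases h3 with h3 | h3
    · have : s(sa, sb) ∈ r1.edges := by
        rw [← Walk.mem_edges_toSubgraph]
        exact h3
      have hsbr1 : sb ∈ r1.support := Walk.snd_mem_support_of_mem_edges _ this
      exact hynot2 ((hmeet sb hsbr1 (ht2sub hsb)) ▸ hsb)
    · have hme : s(sa, sb) ∈ (Walk.cons f t2).edges := by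
        rw [← Walk.mem_edges_toSubgraph]
        exact h3
      rw [Walk.edges_cons] at hme
      rcases List.mem_cons.1 hme with hme | hme
      · rcases Sym2.eq_iff.1 hme with ⟨rfl, rfl⟩ | ⟨rfl, rfl⟩
        · exact hynos1 hsa
        · exact hgnos1 hsa
      · have : sa ∈ t2.support := Walk.fst_mem_support_of_mem_edges _ hme
        exact hynot2 ((hmeet sa (hs1sub hsa) (ht2sub this)) ▸ this)
  -- now build the walk
  set C := colW (H := H) i t2 with hC
  have hmC : C.IsMonophonic := mono_colW i (hr2.of_cons)
  set M3 := Walk.cons (hopAdj (Ne.symm hij) g) C with hM3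
  have hsuppM3 : M3.support = (j, g) :: C.support := Walk.support_cons _ _
  have hmM3 : M3.IsMonophonic := by
    refine hmC.cons _ ?_ ?_
    · intro hc
      obtain ⟨s, _, heq⟩ := mem_support_colW.1 hc
      exact hij (congr_arg Prod.fst heq).symm
    · intro tt htt htne hadj
      obtain ⟨s, hs, rfl⟩ := mem_support_colW.1 htt
      rcases prodAdj_cases hadj with ⟨_, h2⟩ | ⟨h1, _⟩
      · exact htne (by rw [h2])
      · exact hij h1.symm
  set M2 := Walk.cons (colAdj j f) M3 with hM2
  have hsuppM2 : M2.support = (j, y) :: (j, g) :: C.support := by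
    rw [hM2, Walk.support_cons, hsuppM3]
  have hmM2 : M2.IsMonophonic := by
    refine hmM3.cons _ ?_ ?_
    · rw [hsuppM3]
      intro hc
      rcases List.mem_cons.1 hc with heq | hc
      · exact hgy (congr_arg Prod.snd heq).symm
      · obtain ⟨s, hs, heq⟩ := mem_support_colW.1 hc
        exact hij (congr_arg Prod.fst heq).symm
    · rw [hsuppM3]
      intro tt htt htne hadj
      rcases List.mem_cons.1 htt with rfl | htt
      · exact htne rfl
      · obtain ⟨s, hs, rfl⟩ := mem_support_colW.1 htt
        rcases prodAdj_cases hadj with ⟨_, h2⟩ | ⟨h1, _⟩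
        · exact hynot2 (h2 ▸ hs)
        · exact hij h1.symm
  set M := Walk.cons (colAdj j e.symm) M2 with hM
  have hsuppM : M.support = (j, d) :: (j, y) :: (j, g) :: C.support := by
    rw [hM, Walk.support_cons, hsuppM2]
  have hmM : M.IsMonophonic := by
    refine hmM2.cons _ ?_ ?_
    · rw [hsuppM2]
      intro hc
      rcases List.mem_cons.1 hc with heq | hc
      · exact hdy (congr_arg Prod.snd heq)
      · rcases List.mem_cons.1 hc with heq | hc
        · exact hdg (congr_arg Prod.snd heq)
        · obtain ⟨s, hs, heq⟩ := mem_support_colW.1 hc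
          exact hij (congr_arg Prod.fst heq).symm
    · rw [hsuppM2]
      intro tt htt htne hadj
      rcases List.mem_cons.1 htt with rfl | htt
      · exact htne rfl
      · rcases List.mem_cons.1 htt with rfl | htt
        · rcases prodAdj_cases hadj with ⟨_, h2⟩ | ⟨_, h2⟩
          · exact hdg h2
          · exact hadj_dg h2
        · obtain ⟨s, hs, rfl⟩ := mem_support_colW.1 htt
          rcases prodAdj_cases hadj with ⟨_, h2⟩ | ⟨h1, _⟩
          · exact hdnot2 (h2 ▸ hs)
          · exact hij h1.symm
  set R := Walk.cons (hopAdj hij d) M with hRdef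
  have hsuppR : R.support = (i, d) :: (j, d) :: (j, y) :: (j, g) :: C.support := by
    rw [hRdef, Walk.support_cons, hsuppM]
  have hmR : R.IsMonophonic := by
    refine hmM.cons _ ?_ ?_
    · rw [hsuppM]
      intro hc
      rcases List.mem_cons.1 hc with heq | hc
      · exact hij (congr_arg Prod.fst heq)
      · rcases List.mem_cons.1 hc with heq | hc
        · exact hij (congr_arg Prod.fst heq)
        · rcases List.mem_cons.1 hc with heq | hc
          · exact hij (congr_arg Prod.fst heq)
          · obtain ⟨s, hs, heq⟩ := mem_support_colW.1 hc
            have hds : d = s := congr_arg Prod.snd heq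
            subst hds
            exact hdnot2 hs
    · rw [hsuppM]
      intro tt htt htne hadj
      rcases List.mem_cons.1 htt with rfl | htt
      · exact htne rfl
      · rcases List.mem_cons.1 htt with rfl | htt
        · rcases prodAdj_cases hadj with ⟨_, h2⟩ | ⟨h1, _⟩
          · exact hdy h2
          · exact hij h1
        · rcases List.mem_cons.1 htt with rfl | htt
          · rcases prodAdj_cases hadj with ⟨_, h2⟩ | ⟨h1, _⟩
            · exact hdg h2
            · exact hij h1
          · obtain ⟨s, hs, rfl⟩ := mem_support_colW.1 htt
            rcases prodAdj_cases hadj with ⟨h1, _⟩ | ⟨_, h2⟩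
            · exact h1 rfl
            · exact hnoedge d hds1 s hs h2
  have hms1 : s1.IsMonophonic := by
    have h0 := hr1
    rw [hr1eq] at h0
    exact h0.of_append_left
  refine ⟨(colW i s1).append R, ?_, ?_, ?_, ?_⟩
  · refine (mono_colW i hms1).append hmR ?_ ?_
    · intro tt htc htR
      obtain ⟨s, hs, rfl⟩ := mem_support_colW.1 htc
      rw [hsuppR] at htR
      rcases List.mem_cons.1 htR with heq | htR
      · exact heq
      · exfalso
        rcases List.mem_cons.1 htR with heq | htR
        · exact hij (congr_arg Prod.fst heq)
        · rcases List.mem_cons.1 htR with heq | htR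
          · exact hij (congr_arg Prod.fst heq)
          · rcases List.mem_cons.1 htR with heq | htR
            · exact hij (congr_arg Prod.fst heq)
            · obtain ⟨s', hs', heq⟩ := mem_support_colW.1 htR
              have hss' : s = s' := congr_arg Prod.snd heq
              subst hss'
              exact hynos1 ((hmeet s (hs1sub hs) (ht2sub hs')) ▸ hs)
    · intro a b ha hb hav hbv hadj
      obtain ⟨s, hs, rfl⟩ := mem_support_colW.1 ha
      have hsd : s ≠ d := fun hc => hav (by rw [hc])
      rw [hsuppR] at hb
      rcases List.mem_cons.1 hb with rfl | hb
      · exact hbv rfl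
      · rcases List.mem_cons.1 hb with rfl | hb
        · rcases prodAdj_cases hadj with ⟨_, h2⟩ | ⟨h1, _⟩
          · exact hsd h2
          · exact hij h1
        · rcases List.mem_cons.1 hb with rfl | hb
          · rcases prodAdj_cases hadj with ⟨_, h2⟩ | ⟨h1, _⟩
            · exact hynos1 (h2 ▸ hs)
            · exact hij h1
          · rcases List.mem_cons.1 hb with rfl | hb
            · rcases prodAdj_cases hadj with ⟨_, h2⟩ | ⟨h1, _⟩
              · exact hgnos1 (h2 ▸ hs)
              · exact hij h1
            · obtain ⟨s', hs', rfl⟩ := mem_support_colW.1 hb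
              rcases prodAdj_cases hadj with ⟨h1, _⟩ | ⟨_, h2⟩
              · exact h1 rfl
              · exact hnoedge s hs s' hs' h2
  · rw [mem_support_append_iff]
    exact .inl (Walk.start_mem_support _)
  · rw [mem_support_append_iff, hsuppR]
    exact .inr (List.mem_cons_of_mem _ (List.mem_cons_of_mem _ List.mem_cons_self))
  · rw [mem_support_append_iff]
    exact .inr (Walk.end_mem_support _)

end Detour


/-- A set `S` is a *monophonic position set* if no monophonic path contains
more than two vertices of `S`. -/
def SimpleGraph.IsMPSet {V : Type*} (G : SimpleGraph V) (S : Set V) : Prop :=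
  ∀ ⦃u v : V⦄ (p : G.Walk u v), p.IsMonophonic → ({x ∈ S | x ∈ p.support}).ncard ≤ 2

/-- The *monophonic position number*: the largest cardinality of a monophonic
position set. -/
noncomputable def SimpleGraph.mpNum {V : Type*} (G : SimpleGraph V) : ℕ :=
  sSup {n | ∃ S : Set V, G.IsMPSet S ∧ S.ncard = n}

section MPFacts

lemma mem_reverse_support {V : Type*} {G : SimpleGraph V} {u v t : V} {p : G.Walk u v}
    (h : t ∈ p.support) : t ∈ p.reverse.support := by
  rw [SimpleGraph.Walk.support_reverse, List.mem_reverse]; exact h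


open SimpleGraph Walk

variable {V : Type*} {G : SimpleGraph V}

lemma contra3 {S : Set V} (hmp : G.IsMPSet S) {u v : V} {p : G.Walk u v}
    (hm : p.IsMonophonic) {x y z : V} (hx : x ∈ S) (hy : y ∈ S) (hz : z ∈ S)
    (hxs : x ∈ p.support) (hys : y ∈ p.support) (hzs : z ∈ p.support)
    (hxy : x ≠ y) (hxz : x ≠ z) (hyz : y ≠ z) : False := by
  have hsub : ({x, y, z} : Set V) ⊆ {t ∈ S | t ∈ p.support} := by
    rintro t (rfl | rfl | rfl)
    · exact ⟨hx, hxs⟩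
    · exact ⟨hy, hys⟩
    · exact ⟨hz, hzs⟩
  have hfin : {t ∈ S | t ∈ p.support}.Finite :=
    Set.Finite.subset p.support.finite_toSet (fun t ht => ht.2)
  have h3 : ({x, y, z} : Set V).ncard = 3 := Set.ncard_eq_three.2 ⟨x, y, z, hxy, hxz, hyz, rfl⟩
  have hle := Set.ncard_le_ncard hsub hfin
  have h2 := hmp p hm
  omega

lemma ncard_le_mpNum [Finite V] {S : Set V} (h : G.IsMPSet S) : S.ncard ≤ G.mpNum := by
  apply le_csSup
  · refine ⟨Nat.card V, ?_⟩
    rintro m ⟨T, _, rfl⟩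
    calc T.ncard ≤ (Set.univ : Set V).ncard :=
          Set.ncard_le_ncard (Set.subset_univ T) Set.finite_univ
      _ = Nat.card V := Set.ncard_univ V
  · exact ⟨S, h, rfl⟩

lemma empty_mpset : G.IsMPSet (∅ : Set V) := by
  intro u v p _
  have : {x ∈ (∅ : Set V) | x ∈ p.support} = ∅ := by simp
  rw [this]
  simp

end MPFacts

section Main

open SimpleGraph Walk

variable {β : Type*} [Fintype β] {H : SimpleGraph β} {n : ℕ}

lemma main_upper (hH : H.Connected) (hn : H.mpNum ≤ n) {S : Set (Fin n × β)}
    (hS : (PG n H).IsMPSet S) : S.ncard ≤ n := by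
  by_contra hc
  push_neg at hc
  by_cases hinj : Set.InjOn Prod.snd S
  · -- injective case
    have hT : ¬ H.IsMPSet (Prod.snd '' S) := by
      intro hmp
      have h1 := ncard_le_mpNum hmp
      rw [Set.ncard_image_of_injOn hinj] at h1
      omega
    rw [SimpleGraph.IsMPSet] at hT
    push_neg at hT
    obtain ⟨u, w, p, hpm, hgt⟩ := hT
    obtain ⟨t3, ht3sub, ht3card⟩ := Set.exists_subset_card_eq
      (show 3 ≤ {x ∈ Prod.snd '' S | x ∈ p.support}.ncard from by omega)
    obtain ⟨a, b, c, hab, hac, hbc, rfl⟩ := Set.ncard_eq_three.1 ht3card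
    have haS := ht3sub (show a ∈ ({a, b, c} : Set β) by simp)
    have hbS := ht3sub (show b ∈ ({a, b, c} : Set β) by simp)
    have hcS := ht3sub (show c ∈ ({a, b, c} : Set β) by simp)
    obtain ⟨x, y, z, r, hrm, hyr, hxy, hyz, hxz, hxm, hym, hzm⟩ :=
      three_on_path hpm haS.2 hbS.2 hcS.2 hab hac hbc
    have hmemT : ∀ {t : β}, t ∈ ({a, b, c} : Set β) → t ∈ Prod.snd '' S := by
      rintro t (rfl | rfl | rfl)
      · exact haS.1
      · exact hbS.1
      · exact hcS.1
    obtain ⟨X, hXS, hXx⟩ := hmemT hxm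
    obtain ⟨Y, hYS, hYy⟩ := hmemT hym
    obtain ⟨Z, hZS, hZz⟩ := hmemT hzm
    obtain ⟨i, x2⟩ := X
    obtain rfl : x2 = x := hXx
    obtain ⟨j, y2⟩ := Y
    obtain rfl : y2 = y := hYy
    obtain ⟨l, z2⟩ := Z
    obtain rfl : z2 = z := hZz
    have hXY : ((i, x2) : Fin n × β) ≠ (j, y2) := fun h => hxy (congrArg Prod.snd h)
    have hXZ : ((i, x2) : Fin n × β) ≠ (l, z2) := fun h => hxz (congrArg Prod.snd h)
    have hYZ : ((j, y2) : Fin n × β) ≠ (l, z2) := fun h => hyz (congrArg Prod.snd h)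
    by_cases hij : i = j
    · subst hij
      by_cases hjl : i = l
      · subst hjl
        have hW := mono_colW (H := H) i hrm
        refine contra3 hS hW hXS hYS hZS ?_ ?_ ?_ hXY hXZ hYZ
        · exact Walk.start_mem_support _
        · exact mem_support_colW' hyr
        · exact Walk.end_mem_support _
      · obtain ⟨W, hW, hmem1, hmem2⟩ := conscol hjl hrm
        refine contra3 hS hW hXS hYS hZS ?_ ?_ ?_ hXY hXZ hYZ
        · exact hmem1 x2 r.start_mem_support
        · exact hmem1 y2 hyr
        · exact hmem2
    · by_cases hjl : j = l
      · subst hjl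
        obtain ⟨W, hW, hmem1, hmem2⟩ := conscol (Ne.symm hij) hrm.reverse
        refine contra3 hS hW hXS hYS hZS ?_ ?_ ?_ hXY hXZ hYZ
        · exact hmem2
        · exact hmem1 y2 (mem_reverse_support hyr)
        · exact hmem1 z2 (mem_reverse_support r.end_mem_support)
      · by_cases hil : i = l
        · subst hil
          obtain ⟨W, hW, hmem1, hmem2, hmem3⟩ :=
            detour hij hrm hyr (Ne.symm hxy) hyz
          exact contra3 hS hW hXS hYS hZS hmem1 hmem2 hmem3 hXY hXZ hYZ
        · obtain ⟨W, hW, hmem1, hmem2, hmem3⟩ := stair hij hjl hil hrm hyr hyz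
          exact contra3 hS hW hXS hYS hZS hmem1 hmem2 hmem3 hXY hXZ hYZ
  · -- non-injective case
    rw [Set.InjOn] at hinj
    push_neg at hinj
    obtain ⟨X, hXS, Y, hYS, hsnd, hne⟩ := hinj
    obtain ⟨i, a⟩ := X
    obtain ⟨j, a2⟩ := Y
    obtain rfl : a = a2 := hsnd
    have hij : i ≠ j := fun h => hne (by rw [h])
    have hrow : ∀ Z ∈ S, Z.2 = a := by
      intro Z hZS
      obtain ⟨l, c⟩ := Z
      show c = a
      by_contra hca
      have hXZ : ((i, a) : Fin n × β) ≠ (l, c) :=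
        fun h => hca (congrArg Prod.snd h).symm
      have hYZ : ((j, a) : Fin n × β) ≠ (l, c) :=
        fun h => hca (congrArg Prod.snd h).symm
      obtain ⟨r, hrm⟩ := Walk.exists_mono (hH.preconnected a c)
      by_cases hli : l = i
      · subst hli
        obtain ⟨W, hW, hmem1, hmem2⟩ := conscol hij hrm.reverse
        refine contra3 hS hW hXS hYS hZS ?_ ?_ ?_ hne hXZ hYZ
        · exact hmem1 a (mem_reverse_support r.start_mem_support)
        · exact hmem2
        · exact hmem1 c (mem_reverse_support r.end_mem_support)
      · by_cases hlj : l = j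
        · subst hlj
          obtain ⟨W, hW, hmem1, hmem2⟩ := conscol (Ne.symm hij) hrm.reverse
          refine contra3 hS hW hXS hYS hZS ?_ ?_ ?_ hne hXZ hYZ
          · exact hmem2
          · exact hmem1 a (mem_reverse_support r.start_mem_support)
          · exact hmem1 c (mem_reverse_support r.end_mem_support)
        · obtain ⟨W, hW, hmem1, hmem2, hmem3⟩ := stair hij (fun h => hlj h.symm)
            (fun h => hli h.symm) hrm r.start_mem_support (fun h => hca h.symm)
          exact contra3 hS hW hXS hYS hZS hmem1 hmem2 hmem3 hne hXZ hYZ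
    have hsub : S ⊆ ((fun i : Fin n => (i, a)) '' Set.univ) := by
      intro Z hZ
      exact ⟨Z.1, trivial, Prod.ext rfl (hrow Z hZ).symm⟩
    have hinj2 : Function.Injective (fun i : Fin n => (i, a)) := by
      intro i1 i2 h
      exact congr_arg Prod.fst h
    have himg : ((fun i : Fin n => (i, a)) '' Set.univ).ncard = n := by
      rw [Set.ncard_image_of_injective _ hinj2, Set.ncard_univ, Nat.card_eq_fintype_card,
        Fintype.card_fin]
    have := Set.ncard_le_ncard hsub (Set.toFinite _)
    omega

lemma main_lower (hH : H.Connected) : (n : ℕ) ≤ (PG n H).mpNum := by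
  obtain ⟨h0⟩ := hH.nonempty
  set R : Set (Fin n × β) := (fun i : Fin n => (i, h0)) '' Set.univ with hR
  have hinj2 : Function.Injective (fun i : Fin n => (i, h0)) := by
    intro i1 i2 h
    exact congr_arg Prod.fst h
  have hmp : (PG n H).IsMPSet R := by
    intro u v p hp
    by_contra hgt
    obtain ⟨t3, ht3sub, ht3card⟩ := Set.exists_subset_card_eq
      (show 3 ≤ {x ∈ R | x ∈ p.support}.ncard from by omega)
    obtain ⟨x, y, z, hxy, hxz, hyz, rfl⟩ := Set.ncard_eq_three.1 ht3card
    have hx := ht3sub (show x ∈ ({x, y, z} : Set _) by simp)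
    have hy := ht3sub (show y ∈ ({x, y, z} : Set _) by simp)
    have hz := ht3sub (show z ∈ ({x, y, z} : Set _) by simp)
    obtain ⟨ix, -, hix⟩ := hx.1
    obtain ⟨iy, -, hiy⟩ := hy.1
    obtain ⟨iz, -, hiz⟩ := hz.1
    have hadjxy : (PG n H).Adj x y := by
      rw [← hix, ← hiy]
      exact hopAdj (fun h => hxy (by rw [← hix, ← hiy, h])) h0
    have hadjyz : (PG n H).Adj y z := by
      rw [← hiy, ← hiz]
      exact hopAdj (fun h => hyz (by rw [← hiy, ← hiz, h])) h0
    have hadjxz : (PG n H).Adj x z := by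
      rw [← hix, ← hiz]
      exact hopAdj (fun h => hxz (by rw [← hix, ← hiz, h])) h0
    exact Walk.path_triangle_false hp.1 (hp.2 x y hx.2 hy.2 hadjxy)
      (hp.2 y z hy.2 hz.2 hadjyz) (hp.2 x z hx.2 hz.2 hadjxz)
  have hcard : R.ncard = n := by
    rw [hR, Set.ncard_image_of_injective _ hinj2, Set.ncard_univ, Nat.card_eq_fintype_card,
      Fintype.card_fin]
  have := ncard_le_mpNum hmp
  omega

end Main


/-- If `H` is a finite connected graph and `n ≥ mp(H)`, then
`mp(Kₙ □ H) = n`. -/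
theorem mpNum_completeGraph_boxProd {β : Type*} [Fintype β]
    (H : SimpleGraph β) (hH : H.Connected) (n : ℕ) (hn : H.mpNum ≤ n) :
    ((⊤ : SimpleGraph (Fin n)) □ H).mpNum = n := by
  refine le_antisymm ?_ (main_lower hH)
  refine csSup_le ⟨0, ∅, empty_mpset, Set.ncard_empty _⟩ ?_
  rintro m ⟨S, hS, rfl⟩
  exact main_upper hH hn hS
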